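/- Let $V$ be an $n$-dimensional real vector space with basis $\theta_1,\ldots,\theta_n$ and dual basis $\xi_1,\ldots,\xi_n$ of $V^*$. On $\wedge V \otimes \wedge V^*$ define $L = \sum_k e_{\theta_k} \otimes i_{\theta_k}$, $F = \sum_k i_{\xi_k} \otimes e_{\xi_k}$, and $h = \sum_k (e_{\theta_k} \circ i_{\xi_k} \otimes \mathrm{id} - \mathrm{id} \otimes e_{\xi_k} \circ i_{\theta_k})$. Then $LF - FL = h$, $hL - Lh = 2L$, and $hF - Fh = -2F$. -/

import Mathlib

namespace Sl2Aux
open CliffordAlgebra ExteriorAlgebra LinearMap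

section ring
variable {R A : Type*} [CommRing R] [Ring A] [Algebra R A]

lemma ringlemma1 (δ : R) (e g f : A) (h1 : g * f + f * g = δ • 1)
    (h2 : e * f = -(f * e)) : (e * g) * f - f * (e * g) = δ • e := by
  have hg : g * f = δ • 1 - f * g := eq_sub_of_add_eq h1
  have h3 : f * (e * g) = -(e * (f * g)) := by
    rw [← mul_assoc, show f * e = -(e * f) by rw [← neg_neg (f*e), ← h2], neg_mul, mul_assoc]
  rw [mul_assoc, hg, mul_sub, mul_smul_comm, mul_one, h3]
  abel

lemma ringlemma2 (δ : R) (e g f : A) (h1 : f * e + e * f = δ • 1)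
    (h2 : g * f = -(f * g)) : (e * g) * f - f * (e * g) = -(δ • g) := by
  have hf : f * e = δ • 1 - e * f := eq_sub_of_add_eq h1
  rw [mul_assoc, h2, ← mul_assoc f, hf, sub_mul, smul_mul_assoc, one_mul, mul_neg,
    ← mul_assoc e f g]
  abel

end ring

section ext
variable {R M : Type*} [CommRing R] [AddCommGroup M] [Module R M]

noncomputable def Ee (v : M) : Module.End R (ExteriorAlgebra R M) :=
  LinearMap.mulLeft R (ExteriorAlgebra.ι R v)

noncomputable def Cc (d : Module.Dual R M) : Module.End R (ExteriorAlgebra R M) :=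
  contractLeft (Q := (0 : QuadraticForm R M)) d

lemma cc_ee (d : Module.Dual R M) (v : M) :
    Cc d * Ee v + Ee v * Cc d = d v • 1 := by
  apply LinearMap.ext; intro x
  simp only [LinearMap.add_apply, Module.End.mul_apply, Cc, Ee, LinearMap.mulLeft_apply,
    LinearMap.smul_apply, Module.End.one_apply]
  rw [contractLeft_ι_mul]
  abel

lemma cc_cc (d d' : Module.Dual R M) : Cc (M := M) d * Cc d' = -(Cc d' * Cc d) := by
  apply LinearMap.ext; intro x
  simp only [Module.End.mul_apply, Cc, LinearMap.neg_apply]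
  exact contractLeft_comm _ _ _

lemma ee_ee (v w : M) : Ee (R := R) v * Ee w = -(Ee w * Ee v) := by
  apply LinearMap.ext; intro x
  simp only [Module.End.mul_apply, Ee, LinearMap.mulLeft_apply, LinearMap.neg_apply]
  rw [← mul_assoc, ← mul_assoc, eq_neg_of_add_eq_zero_left (ι_add_mul_swap v w), neg_mul]

end ext

section tensor
variable {R M N : Type*} [CommRing R] [AddCommGroup M] [AddCommGroup N]
  [Module R M] [Module R N]

lemma map_mul (f f' : Module.End R M) (g g' : Module.End R N) :
    TensorProduct.map f g * TensorProduct.map f' g' = TensorProduct.map (f * f') (g * g') := by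
  rw [Module.End.mul_eq_comp, Module.End.mul_eq_comp, Module.End.mul_eq_comp, TensorProduct.map_comp]

lemma map_one : TensorProduct.map (1 : Module.End R M) (1 : Module.End R N) = 1 := by
  exact TensorProduct.map_id

lemma map_neg_left (f : Module.End R M) (g : Module.End R N) :
    TensorProduct.map (-f) g = -TensorProduct.map f g := by
  rw [← neg_one_smul R f, TensorProduct.map_smul_left]; module

lemma map_neg_right (f : Module.End R M) (g : Module.End R N) :
    TensorProduct.map f (-g) = -TensorProduct.map f g := by
  rw [← neg_one_smul R g, TensorProduct.map_smul_right]; module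

lemma map_sub_left (f f' : Module.End R M) (g : Module.End R N) :
    TensorProduct.map (f - f') g = TensorProduct.map f g - TensorProduct.map f' g := by
  rw [sub_eq_add_neg, TensorProduct.map_add_left, map_neg_left, sub_eq_add_neg]

lemma map_sub_right (f : Module.End R M) (g g' : Module.End R N) :
    TensorProduct.map f (g - g') = TensorProduct.map f g - TensorProduct.map f g' := by
  rw [sub_eq_add_neg, TensorProduct.map_add_right, map_neg_right, sub_eq_add_neg]

end tensor


lemma sl2 {R P Q : Type*} [CommRing R] [AddCommGroup P] [AddCommGroup Q]
    [Module R P] [Module R Q] {n : ℕ}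
    (A B : Fin n → Module.End R P) (A' B' : Fin n → Module.End R Q)
    (hBA : ∀ j k, B j * A k + A k * B j = (if j = k then (1:R) else 0) • 1)
    (hBA' : ∀ j k, B' j * A' k + A' k * B' j = (if j = k then (1:R) else 0) • 1)
    (hAA : ∀ j k, A j * A k = -(A k * A j))
    (hBB : ∀ j k, B j * B k = -(B k * B j))
    (hAA' : ∀ j k, A' j * A' k = -(A' k * A' j))
    (hBB' : ∀ j k, B' j * B' k = -(B' k * B' j)) :
    ((∑ k, TensorProduct.map (A k) (B' k)) * (∑ k, TensorProduct.map (B k) (A' k)) -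
      (∑ k, TensorProduct.map (B k) (A' k)) * (∑ k, TensorProduct.map (A k) (B' k)) =
      ∑ k, (TensorProduct.map (A k * B k) 1 - TensorProduct.map 1 (A' k * B' k))) ∧
    ((∑ k, (TensorProduct.map (A k * B k) 1 - TensorProduct.map 1 (A' k * B' k))) *
      (∑ k, TensorProduct.map (A k) (B' k)) -
      (∑ k, TensorProduct.map (A k) (B' k)) *
      (∑ k, (TensorProduct.map (A k * B k) 1 - TensorProduct.map 1 (A' k * B' k))) =
      2 • ∑ k, TensorProduct.map (A k) (B' k)) ∧
    ((∑ k, (TensorProduct.map (A k * B k) 1 - TensorProduct.map 1 (A' k * B' k))) *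
      (∑ k, TensorProduct.map (B k) (A' k)) -
      (∑ k, TensorProduct.map (B k) (A' k)) *
      (∑ k, (TensorProduct.map (A k * B k) 1 - TensorProduct.map 1 (A' k * B' k))) =
      -(2 • ∑ k, TensorProduct.map (B k) (A' k))) := by
  classical
  have hsym : ∀ j k : Fin n, (if k = j then (1:R) else 0) = (if j = k then (1:R) else 0) := by
    intro j k
    by_cases h : j = k
    · simp [h]
    · simp [h, Ne.symm h]
  have expand : ∀ P₁ Q₁ : Fin n → Module.End R (TensorProduct R P Q),
      (∑ j, P₁ j) * (∑ k, Q₁ k) - (∑ k, Q₁ k) * (∑ j, P₁ j)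
        = ∑ j, ∑ k, (P₁ j * Q₁ k - Q₁ k * P₁ j) := by
    intro P₁ Q₁
    rw [Finset.sum_mul_sum, Finset.sum_mul_sum,
      Finset.sum_comm (s := Finset.univ) (t := Finset.univ) (f := fun k j => Q₁ k * P₁ j),
      ← Finset.sum_sub_distrib]
    exact Finset.sum_congr rfl fun j _ => by rw [Finset.sum_sub_distrib]
  refine ⟨?_, ?_, ?_⟩
  · rw [expand]
    have key1 : ∀ j k, TensorProduct.map (A j) (B' j) * TensorProduct.map (B k) (A' k)
        - TensorProduct.map (B k) (A' k) * TensorProduct.map (A j) (B' j)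
        = if j = k then
            (TensorProduct.map (A j * B j) 1 - TensorProduct.map 1 (A' j * B' j)) else 0 := by
      intro j k
      rw [map_mul, map_mul]
      by_cases h : j = k
      · subst h
        rw [if_pos rfl]
        have h1 : B j * A j = 1 - A j * B j := by
          have := hBA j j; rw [if_pos rfl, one_smul] at this; exact eq_sub_of_add_eq this
        have h3 : B' j * A' j = 1 - A' j * B' j := by
          have := hBA' j j; rw [if_pos rfl, one_smul] at this; exact eq_sub_of_add_eq this
        rw [h1, h3, map_sub_right, map_sub_left]
        abel
      · rw [if_neg h]
        have h1 : B k * A j = -(A j * B k) := by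
          have := hBA k j; rw [hsym, if_neg h, zero_smul] at this
          exact eq_neg_of_add_eq_zero_left this
        have h2 : A' k * B' j = -(B' j * A' k) := by
          have := hBA' j k; rw [if_neg h, zero_smul] at this
          exact eq_neg_of_add_eq_zero_right this
        rw [h1, h2, map_neg_left, map_neg_right, neg_neg, sub_self]
    calc ∑ j, ∑ k, (TensorProduct.map (A j) (B' j) * TensorProduct.map (B k) (A' k)
          - TensorProduct.map (B k) (A' k) * TensorProduct.map (A j) (B' j))
        = ∑ j, ∑ k, (if j = k then
            (TensorProduct.map (A j * B j) 1 - TensorProduct.map 1 (A' j * B' j)) else 0) :=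
          Finset.sum_congr rfl fun j _ => Finset.sum_congr rfl fun k _ => key1 j k
      _ = _ := by simp
  · rw [expand]
    have key2 : ∀ j k,
        (TensorProduct.map (A j * B j) 1 - TensorProduct.map 1 (A' j * B' j)) *
          TensorProduct.map (A k) (B' k) -
        TensorProduct.map (A k) (B' k) *
          (TensorProduct.map (A j * B j) 1 - TensorProduct.map 1 (A' j * B' j))
        = if j = k then 2 • TensorProduct.map (A j) (B' j) else 0 := by
      intro j k
      have c1 := eq_add_of_sub_eq
        (ringlemma1 (if j = k then (1:R) else 0) (A j) (B j) (A k) (hBA j k) (hAA j k))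
      have hs : B' k * A' j + A' j * B' k = (if j = k then (1:R) else 0) • 1 := by
        rw [← hsym j k]; exact hBA' k j
      have c2 := eq_add_of_sub_eq
        (ringlemma2 (if j = k then (1:R) else 0) (A' j) (B' j) (B' k) hs (hBB' j k))
      rw [sub_mul, mul_sub, map_mul, map_mul, map_mul, map_mul, c1, c2,
        TensorProduct.map_add_left, TensorProduct.map_smul_left,
        TensorProduct.map_add_right, map_neg_right, TensorProduct.map_smul_right]
      by_cases h : j = k
      · subst h
        simp only [eq_self_iff_true, if_true, one_smul, one_mul, mul_one]
        abel
      · simp only [if_neg h, zero_smul, neg_zero, zero_add, one_mul, mul_one]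
        abel
    calc ∑ j, ∑ k, _ = ∑ j, ∑ k, (if j = k then 2 • TensorProduct.map (A j) (B' j) else 0) :=
          Finset.sum_congr rfl fun j _ => Finset.sum_congr rfl fun k _ => key2 j k
      _ = _ := by
          simp [Finset.smul_sum]
  · rw [expand]
    have key3 : ∀ j k,
        (TensorProduct.map (A j * B j) 1 - TensorProduct.map 1 (A' j * B' j)) *
          TensorProduct.map (B k) (A' k) -
        TensorProduct.map (B k) (A' k) *
          (TensorProduct.map (A j * B j) 1 - TensorProduct.map 1 (A' j * B' j))
        = if j = k then -(2 • TensorProduct.map (B j) (A' j)) else 0 := by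
      intro j k
      have hs : B k * A j + A j * B k = (if j = k then (1:R) else 0) • 1 := by
        rw [← hsym j k]; exact hBA k j
      have c3 := eq_add_of_sub_eq
        (ringlemma2 (if j = k then (1:R) else 0) (A j) (B j) (B k) hs (hBB j k))
      have c4 := eq_add_of_sub_eq
        (ringlemma1 (if j = k then (1:R) else 0) (A' j) (B' j) (A' k) (hBA' j k) (hAA' j k))
      rw [sub_mul, mul_sub, map_mul, map_mul, map_mul, map_mul, c3, c4,
        TensorProduct.map_add_left, map_neg_left, TensorProduct.map_smul_left,
        TensorProduct.map_add_right, TensorProduct.map_smul_right]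
      by_cases h : j = k
      · subst h
        simp only [eq_self_iff_true, if_true, one_smul, one_mul, mul_one]
        abel
      · simp only [if_neg h, zero_smul, neg_zero, zero_add, one_mul, mul_one]
        abel
    calc ∑ j, ∑ k, _ = ∑ j, ∑ k, (if j = k then -(2 • TensorProduct.map (B j) (A' j)) else 0) :=
          Finset.sum_congr rfl fun j _ => Finset.sum_congr rfl fun k _ => key3 j k
      _ = _ := by
          simp [Finset.smul_sum]
end Sl2Aux



open CliffordAlgebra ExteriorAlgebra

variable {n : ℕ} {V : Type*} [AddCommGroup V] [Module ℝ V]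

/-- `L = ∑ e_{θₖ} ⊗ i_{θₖ}` on `⋀V ⊗ ⋀V*`. -/
noncomputable def Lext (θ : Module.Basis (Fin n) ℝ V) :
    Module.End ℝ (TensorProduct ℝ (ExteriorAlgebra ℝ V)
      (ExteriorAlgebra ℝ (Module.Dual ℝ V))) :=
  ∑ k : Fin n, TensorProduct.map
    (LinearMap.mulLeft ℝ (ExteriorAlgebra.ι ℝ (θ k)))
    (contractLeft (Q := (0 : QuadraticForm ℝ (Module.Dual ℝ V)))
      (Module.Dual.eval ℝ V (θ k)))

/-- `F = ∑ i_{ξₖ} ⊗ e_{ξₖ}` on `⋀V ⊗ ⋀V*`. -/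
noncomputable def Fext (θ : Module.Basis (Fin n) ℝ V) :
    Module.End ℝ (TensorProduct ℝ (ExteriorAlgebra ℝ V)
      (ExteriorAlgebra ℝ (Module.Dual ℝ V))) :=
  ∑ k : Fin n, TensorProduct.map
    (contractLeft (Q := (0 : QuadraticForm ℝ V)) (θ.coord k))
    (LinearMap.mulLeft ℝ (ExteriorAlgebra.ι ℝ (θ.coord k)))

/-- `h = ∑ (e_{θₖ} ∘ i_{ξₖ} ⊗ id - id ⊗ e_{ξₖ} ∘ i_{θₖ})` on `⋀V ⊗ ⋀V*`. -/
noncomputable def hext (θ : Module.Basis (Fin n) ℝ V) :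
    Module.End ℝ (TensorProduct ℝ (ExteriorAlgebra ℝ V)
      (ExteriorAlgebra ℝ (Module.Dual ℝ V))) :=
  ∑ k : Fin n,
    (TensorProduct.map
      (LinearMap.mulLeft ℝ (ExteriorAlgebra.ι ℝ (θ k)) ∘ₗ
        contractLeft (Q := (0 : QuadraticForm ℝ V)) (θ.coord k))
      LinearMap.id -
     TensorProduct.map LinearMap.id
      (LinearMap.mulLeft ℝ (ExteriorAlgebra.ι ℝ (θ.coord k)) ∘ₗ
        contractLeft (Q := (0 : QuadraticForm ℝ (Module.Dual ℝ V)))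
          (Module.Dual.eval ℝ V (θ k))))

/-- The `sl₂`-relations `LF - FL = h`, `hL - Lh = 2L`, `hF - Fh = -2F` on `⋀V ⊗ ⋀V*`. -/
theorem stmt14 (θ : Module.Basis (Fin n) ℝ V) :
    Lext θ ∘ₗ Fext θ - Fext θ ∘ₗ Lext θ = hext θ ∧
    hext θ ∘ₗ Lext θ - Lext θ ∘ₗ hext θ = 2 • Lext θ ∧
    hext θ ∘ₗ Fext θ - Fext θ ∘ₗ hext θ = -(2 • Fext θ) := by
  have δc : ∀ j k : Fin n, θ.coord j (θ k) = (if j = k then (1:ℝ) else 0) := by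
    intro j k
    rw [Module.Basis.coord_apply, Module.Basis.repr_self_apply]
    by_cases h : j = k
    · simp [h]
    · simp [h, Ne.symm h]
  have δe : ∀ j k : Fin n,
      Module.Dual.eval ℝ V (θ j) (θ.coord k) = (if j = k then (1:ℝ) else 0) := by
    intro j k
    rw [Module.Dual.eval_apply, Module.Basis.coord_apply, Module.Basis.repr_self_apply]
  obtain ⟨h1, h2, h3⟩ := Sl2Aux.sl2
    (fun k => Sl2Aux.Ee (θ k)) (fun k => Sl2Aux.Cc (θ.coord k))
    (fun k => Sl2Aux.Ee (θ.coord k)) (fun k => Sl2Aux.Cc (Module.Dual.eval ℝ V (θ k)))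
    (fun j k => by rw [← δc j k]; exact Sl2Aux.cc_ee _ _)
    (fun j k => by rw [← δe j k]; exact Sl2Aux.cc_ee _ _)
    (fun j k => Sl2Aux.ee_ee _ _)
    (fun j k => Sl2Aux.cc_cc _ _)
    (fun j k => Sl2Aux.ee_ee _ _)
    (fun j k => Sl2Aux.cc_cc _ _)
  exact ⟨h1, h2, h3⟩
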